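/- Let n ≥ 2, 0 < σ < 1/2, α > 0 and 1 ≤ p ≤ n/α. There exist constants c, C > 0 depending only on n, σ, α and p such that for all 0 < δ < 1 with δ^σ ≤ 1/2, δ^{1-σ} ≤ 1/40 and δ^{1-2σ} ≤ 1/80, the indicator V = χ_Ω satisfies c · max{1, δ^{σ(n+1)/p - α}} ≤ ‖V‖_{𝓛^{α,p}} ≤ C · max{1, δ^{σ(n+1)/p - α}}. -/

import Mathlib

open Real MeasureTheory ENNReal

/-- The Morrey–Campanato norm
`‖V‖_{𝓛^{α,p}} = sup_{x,r>0} r^α (r^{-n} ∫_{B(x,r)} V^p)^{1/p}` (valued in `ℝ≥0∞`). -/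
noncomputable def morreyNorm (n : ℕ) (α p : ℝ) (V : EuclideanSpace ℝ (Fin n) → ℝ) : ℝ≥0∞ :=
  ⨆ (x : EuclideanSpace ℝ (Fin n)) (r : ℝ) (_ : 0 < r),
    ENNReal.ofReal (r ^ α) *
      (ENNReal.ofReal (r ^ (-(n : ℝ))) *
        ∫⁻ y in Metric.ball x r, ENNReal.ofReal (V y ^ p)) ^ (1/p)

open Metric

section auxlemmas

-- natural interval count
lemma card_Icc_le' {a b : ℝ} (M : ℕ) (h : a ≤ b) :
    ((Finset.Icc ⌈a⌉₊ (min ⌊b⌋₊ M)).card : ℝ) ≤ min (b - a) (M : ℝ) + 1 := by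
  rcases lt_or_ge (min ⌊b⌋₊ M) ⌈a⌉₊ with hlt | hle
  · rw [Finset.Icc_eq_empty (by omega)]
    simp only [Finset.card_empty, Nat.cast_zero]
    have : (0:ℝ) ≤ min (b - a) (M:ℝ) := le_min (by linarith) (by positivity)
    linarith
  · rw [Nat.card_Icc]
    have hcast : ((min ⌊b⌋₊ M + 1 - ⌈a⌉₊ : ℕ) : ℝ)
        = ((min ⌊b⌋₊ M : ℕ) : ℝ) - (⌈a⌉₊ : ℝ) + 1 := by
      have : ⌈a⌉₊ ≤ min ⌊b⌋₊ M + 1 := by omega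
      push_cast [Nat.cast_sub this]
      ring
    rw [hcast]
    refine add_le_add_left (le_min ?_ ?_) 1
    · -- ≤ b - a
      have h1 : ((min ⌊b⌋₊ M : ℕ) : ℝ) - (⌈a⌉₊:ℝ) ≤ b - a := by
        rcases le_or_gt 0 b with hb | hb
        · have h2 : ((min ⌊b⌋₊ M : ℕ) : ℝ) ≤ b := by
            calc ((min ⌊b⌋₊ M : ℕ) : ℝ) ≤ (⌊b⌋₊ : ℝ) := by exact_mod_cast min_le_left _ _
              _ ≤ b := Nat.floor_le hb
          have h3 : a ≤ (⌈a⌉₊ : ℝ) := Nat.le_ceil a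
          linarith
        · have hb0 : ⌊b⌋₊ = 0 := Nat.floor_of_nonpos hb.le
          have : min ⌊b⌋₊ M = 0 := by omega
          rw [this]
          simp only [Nat.cast_zero]
          have : (0:ℝ) ≤ (⌈a⌉₊:ℝ) := by positivity
          linarith
      linarith
    · have : ((min ⌊b⌋₊ M : ℕ) : ℝ) ≤ (M:ℝ) := by exact_mod_cast min_le_right _ _
      have : (0:ℝ) ≤ (⌈a⌉₊:ℝ) := by positivity
      have h2 : ((min ⌊b⌋₊ M : ℕ) : ℝ) ≤ (M:ℝ) := by exact_mod_cast min_le_right _ _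
      linarith

lemma nat_abs_sub_ge_one {a b : ℕ} (h : a ≠ b) : (1:ℝ) ≤ |(a:ℝ) - (b:ℝ)| := by
  have h0 : ((a:ℤ) - b) ≠ 0 := sub_ne_zero.2 (by exact_mod_cast h)
  have h1 := Int.one_le_abs h0
  calc (1:ℝ) ≤ ((|(a:ℤ) - b| : ℤ) : ℝ) := by exact_mod_cast h1
    _ = |(a:ℝ) - b| := by push_cast; rfl

lemma core_upper {n : ℕ} (hn : 2 ≤ n) {σ β δ : ℝ} (hσ0 : 0 < σ) (hσ1 : σ < 1/2)
    (hβ0 : 0 < β) (hβn : β ≤ n) (hδ0 : 0 < δ) (hδ1 : δ < 1)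
    {r : ℝ} (hr : 1 ≤ r) :
    r ^ (β - n) * (min (max 1 (r * δ^σ)) (δ^(σ-1)/20))^(n-1)
      * min (max 1 (r * δ^(2*σ))) (δ^(2*σ-1)/40)
      ≤ max 1 (δ ^ (σ*(n+1) - β)) := by
  have hr0 : (0:ℝ) < r := lt_of_lt_of_le one_pos hr
  have hδ1' : δ ≤ 1 := hδ1.le
  have hs0 : (0:ℝ) < δ^σ := Real.rpow_pos_of_pos hδ0 _
  have hs1 : δ^σ ≤ 1 := Real.rpow_le_one hδ0.le hδ1' hσ0.le
  have hs20 : (0:ℝ) < δ^(2*σ) := Real.rpow_pos_of_pos hδ0 _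
  have hss : δ^(2*σ) = δ^σ * δ^σ := by rw [← Real.rpow_add hδ0]; ring_nf
  have hnc : ((n-1:ℕ):ℝ) = (n:ℝ)-1 := by
    rw [Nat.cast_sub (by omega)]; norm_num
  have hmono : ∀ {x y : ℝ}, y ≤ x → δ^x ≤ δ^y := fun h => Real.rpow_le_rpow_of_exponent_ge hδ0 hδ1' h
  have hXnn : (0:ℝ) ≤ min (max 1 (r * δ^σ)) (δ^(σ-1)/20) :=
    le_min (by positivity) (by positivity)
  have hYnn : (0:ℝ) ≤ min (max 1 (r * δ^(2*σ))) (δ^(2*σ-1)/40) :=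
    le_min (by positivity) (by positivity)
  set X := min (max 1 (r * δ^σ)) (δ^(σ-1)/20) with hX
  set Y := min (max 1 (r * δ^(2*σ))) (δ^(2*σ-1)/40) with hY
  rcases le_or_gt r (δ^(-σ)) with h1 | h1
  · -- case r ≤ δ^{-σ}
    have hrs : r * δ^σ ≤ 1 := by
      have := mul_le_mul_of_nonneg_right h1 hs0.le
      rwa [← Real.rpow_add hδ0, neg_add_cancel, Real.rpow_zero] at this
    have hrs2 : r * δ^(2*σ) ≤ 1 := by
      rw [hss]
      nlinarith
    have hX1 : X ≤ 1 := le_trans (min_le_left _ _) (by rw [max_le_iff]; exact ⟨le_rfl, hrs⟩)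
    have hY1 : Y ≤ 1 := le_trans (min_le_left _ _) (by rw [max_le_iff]; exact ⟨le_rfl, hrs2⟩)
    have h2 : r ^ (β - n) ≤ 1 := Real.rpow_le_one_of_one_le_of_nonpos hr (by linarith)
    calc r ^ (β - n) * X^(n-1) * Y ≤ 1 * 1^(n-1) * 1 := by
          apply mul_le_mul (mul_le_mul h2 (pow_le_pow_left₀ hXnn hX1 _) (by positivity) one_pos.le)
            hY1 hYnn (by norm_num)
      _ = 1 := by norm_num
      _ ≤ _ := le_max_left _ _
  · rcases le_or_gt r (δ^(-(2*σ))) with h2 | h2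
    · -- case δ^{-σ} < r ≤ δ^{-2σ}
      have hrs : 1 ≤ r * δ^σ := by
        have := mul_le_mul_of_nonneg_right h1.le hs0.le
        rwa [← Real.rpow_add hδ0, neg_add_cancel, Real.rpow_zero] at this
      have hrs2 : r * δ^(2*σ) ≤ 1 := by
        have := mul_le_mul_of_nonneg_right h2 hs20.le
        rwa [← Real.rpow_add hδ0, neg_add_cancel, Real.rpow_zero] at this
      have hX1 : X ≤ r * δ^σ := le_trans (min_le_left _ _) (max_le hrs le_rfl)
      have hY1 : Y ≤ 1 := le_trans (min_le_left _ _) (by rw [max_le_iff]; exact ⟨le_rfl, hrs2⟩)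
      have key : r ^ (β - n) * (r * δ^σ)^(n-1) * 1 = r ^ (β-1) * δ^(σ*((n:ℝ)-1)) := by
        rw [mul_one, mul_pow, ← Real.rpow_natCast r (n-1), ← Real.rpow_natCast (δ^σ) (n-1),
          ← Real.rpow_mul hδ0.le, hnc]
        rw [show r ^ (β - (n:ℝ)) * (r ^ ((n:ℝ)-1) * δ ^ (σ*((n:ℝ)-1)))
            = (r^(β-(n:ℝ)) * r^((n:ℝ)-1)) * δ^(σ*((n:ℝ)-1)) from by ring,
          ← Real.rpow_add hr0, show β - (n:ℝ) + ((n:ℝ)-1) = β - 1 from by ring]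
      have step : r ^ (β - n) * X^(n-1) * Y ≤ r ^ (β-1) * δ^(σ*((n:ℝ)-1)) := by
        rw [← key]
        apply mul_le_mul (mul_le_mul_of_nonneg_left (pow_le_pow_left₀ hXnn hX1 _)
          (by positivity)) hY1 hYnn (by positivity)
      rcases le_or_gt 1 β with hβ1 | hβ1
      · have h3 : r ^ (β-1) ≤ (δ^(-(2*σ))) ^ (β-1) :=
          Real.rpow_le_rpow hr0.le h2 (by linarith)
        have h4 : (δ^(-(2*σ)))^(β-1) = δ ^ (-(2*σ)*(β-1)) := by rw [← Real.rpow_mul hδ0.le]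
        calc r ^ (β - n) * X^(n-1) * Y ≤ r ^ (β-1) * δ^(σ*((n:ℝ)-1)) := step
          _ ≤ δ ^ (-(2*σ)*(β-1)) * δ^(σ*((n:ℝ)-1)) := by
              rw [← h4]; exact mul_le_mul_of_nonneg_right h3 (by positivity)
          _ = δ ^ (-(2*σ)*(β-1) + σ*((n:ℝ)-1)) := by rw [← Real.rpow_add hδ0]
          _ ≤ δ ^ (σ*((n:ℝ)+1) - β) := by apply hmono; nlinarith
          _ ≤ _ := le_max_right _ _
      · have h3 : r ^ (β-1) ≤ (δ^(-σ)) ^ (β-1) :=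
          Real.rpow_le_rpow_of_nonpos (Real.rpow_pos_of_pos hδ0 _) h1.le (by linarith)
        have h4 : (δ^(-σ))^(β-1) = δ ^ (-σ*(β-1)) := by rw [← Real.rpow_mul hδ0.le]
        calc r ^ (β - n) * X^(n-1) * Y ≤ r ^ (β-1) * δ^(σ*((n:ℝ)-1)) := step
          _ ≤ δ ^ (-σ*(β-1)) * δ^(σ*((n:ℝ)-1)) := by
              rw [← h4]; exact mul_le_mul_of_nonneg_right h3 (by positivity)
          _ = δ ^ (-σ*(β-1) + σ*((n:ℝ)-1)) := by rw [← Real.rpow_add hδ0]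
          _ ≤ 1 := Real.rpow_le_one hδ0.le hδ1' (by nlinarith)
          _ ≤ _ := le_max_left _ _
    · -- r > δ^{-2σ}
      rcases le_or_gt r δ⁻¹ with h3 | h3
      · -- δ^{-2σ} < r ≤ δ⁻¹
        have hrs : 1 ≤ r * δ^σ := by
          have hle : δ^(-σ) ≤ δ^(-(2*σ)) := hmono (by linarith)
          have := mul_le_mul_of_nonneg_right (le_trans hle h2.le) hs0.le
          rwa [← Real.rpow_add hδ0, neg_add_cancel, Real.rpow_zero] at this
        have hrs2 : 1 ≤ r * δ^(2*σ) := by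
          have := mul_le_mul_of_nonneg_right h2.le hs20.le
          rwa [← Real.rpow_add hδ0, neg_add_cancel, Real.rpow_zero] at this
        have hX1 : X ≤ r * δ^σ := le_trans (min_le_left _ _) (max_le hrs le_rfl)
        have hY1 : Y ≤ r * δ^(2*σ) := le_trans (min_le_left _ _) (max_le hrs2 le_rfl)
        have key : r ^ (β - n) * (r * δ^σ)^(n-1) * (r * δ^(2*σ))
            = r ^ β * δ^(σ*((n:ℝ)+1)) := by
          rw [mul_pow, ← Real.rpow_natCast r (n-1), ← Real.rpow_natCast (δ^σ) (n-1),
            ← Real.rpow_mul hδ0.le, hnc]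
          rw [show r ^ (β - (n:ℝ)) * (r ^ ((n:ℝ)-1) * δ ^ (σ*((n:ℝ)-1))) * (r * δ^(2*σ))
              = (r ^ (β-(n:ℝ)) * r^((n:ℝ)-1) * r^(1:ℝ)) * (δ^(σ*((n:ℝ)-1)) * δ^(2*σ)) from by
            rw [Real.rpow_one]; ring]
          rw [← Real.rpow_add hr0, ← Real.rpow_add hr0, ← Real.rpow_add hδ0,
            show β - (n:ℝ) + ((n:ℝ)-1) + 1 = β from by ring,
            show σ*((n:ℝ)-1) + 2*σ = σ*((n:ℝ)+1) from by ring]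
        have step : r ^ (β - n) * X^(n-1) * Y ≤ r ^ β * δ^(σ*((n:ℝ)+1)) := by
          rw [← key]
          apply mul_le_mul (mul_le_mul_of_nonneg_left (pow_le_pow_left₀ hXnn hX1 _)
            (by positivity)) hY1 hYnn (by positivity)
        have h4 : r ^ β ≤ (δ⁻¹) ^ β := Real.rpow_le_rpow hr0.le h3 hβ0.le
        have h5 : (δ⁻¹)^β = δ ^ (-β) := by
          rw [← Real.rpow_neg_one δ, ← Real.rpow_mul hδ0.le]; ring_nf
        calc r ^ (β - n) * X^(n-1) * Y ≤ r ^ β * δ^(σ*((n:ℝ)+1)) := step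
          _ ≤ δ^(-β) * δ^(σ*((n:ℝ)+1)) := by
              rw [← h5]; exact mul_le_mul_of_nonneg_right h4 (by positivity)
          _ = δ ^ (-β + σ*((n:ℝ)+1)) := by rw [← Real.rpow_add hδ0]
          _ = δ ^ (σ*((n:ℝ)+1) - β) := by ring_nf
          _ ≤ _ := le_max_right _ _
      · -- r > δ⁻¹
        have hX1 : X ≤ δ^(σ-1) :=
          le_trans (min_le_right _ _) (by linarith [Real.rpow_pos_of_pos hδ0 (σ-1)])
        have hY1 : Y ≤ δ^(2*σ-1) :=
          le_trans (min_le_right _ _) (by linarith [Real.rpow_pos_of_pos hδ0 (2*σ-1)])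
        have h4 : r ^ (β - n) ≤ (δ⁻¹) ^ (β - n) :=
          Real.rpow_le_rpow_of_nonpos (by positivity) h3.le (by linarith)
        have h5 : (δ⁻¹)^(β-(n:ℝ)) = δ ^ ((n:ℝ)-β) := by
          rw [← Real.rpow_neg_one δ, ← Real.rpow_mul hδ0.le]; ring_nf
        have h6 : (δ^(σ-1))^(n-1) = δ^((σ-1)*((n:ℝ)-1)) := by
          rw [← Real.rpow_natCast (δ^(σ-1)) (n-1), ← Real.rpow_mul hδ0.le, hnc]
        calc r ^ (β - n) * X^(n-1) * Y
            ≤ δ^((n:ℝ)-β) * δ^((σ-1)*((n:ℝ)-1)) * δ^(2*σ-1) := by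
              rw [← h5, ← h6]
              apply mul_le_mul (mul_le_mul h4 (pow_le_pow_left₀ hXnn hX1 _)
                (by positivity) (by positivity)) hY1 hYnn (by positivity)
          _ = δ ^ ((n:ℝ)-β + (σ-1)*((n:ℝ)-1) + (2*σ-1)) := by
              rw [← Real.rpow_add hδ0, ← Real.rpow_add hδ0]
          _ = δ ^ (σ*((n:ℝ)+1) - β) := by ring_nf
          _ ≤ _ := le_max_right _ _

noncomputable def ptL (n : ℕ) (σ δ : ℝ) (m : Fin n → ℕ) : EuclideanSpace ℝ (Fin n) :=
  WithLp.toLp 2 (fun j : Fin n => if (j:ℕ) < n-1 then (m j : ℝ) * δ^(-σ) else 2 * (m j : ℝ) * δ^(-(2*σ)))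

def latSet (n : ℕ) (σ δ : ℝ) (hn : 2 ≤ n) : Set (EuclideanSpace ℝ (Fin n)) :=
  {z | (∀ j : Fin n, (j : ℕ) < n - 1 →
        ∃ pj : ℕ, (pj : ℝ) ≤ (1/40) * δ ^ (σ - 1) ∧ z j = (pj : ℝ) * δ ^ (-σ)) ∧
      (∃ q : ℕ, (q : ℝ) ≤ (1/80) * δ ^ (2*σ - 1) ∧
        z ⟨n - 1, Nat.sub_lt (lt_of_lt_of_le two_pos hn) one_pos⟩ = 2 * (q : ℝ) * δ ^ (-(2*σ)))}

def lastI (n : ℕ) (hn : 2 ≤ n) : Fin n := ⟨n-1, Nat.sub_lt (lt_of_lt_of_le two_pos hn) one_pos⟩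

lemma lastI_spec {n : ℕ} (hn : 2 ≤ n) (j : Fin n) (h : ¬ (j:ℕ) < n-1) : j = lastI n hn := by
  have := j.isLt
  exact Fin.ext (by simp only [lastI]; omega)

lemma ptL_apply_lt {n : ℕ} (σ δ : ℝ) (m : Fin n → ℕ) {j : Fin n} (h : (j:ℕ) < n-1) :
    ptL n σ δ m j = (m j : ℝ) * δ^(-σ) := by
  show (if (j:ℕ) < n-1 then (m j : ℝ) * δ^(-σ) else 2 * (m j : ℝ) * δ^(-(2*σ))) = _
  rw [if_pos h]

lemma ptL_apply_last {n : ℕ} (hn : 2 ≤ n) (σ δ : ℝ) (m : Fin n → ℕ) :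
    ptL n σ δ m (lastI n hn) = 2 * (m (lastI n hn) : ℝ) * δ^(-(2*σ)) := by
  show (if ((lastI n hn : Fin n):ℕ) < n-1 then _ else 2 * (m (lastI n hn) : ℝ) * δ^(-(2*σ))) = _
  rw [if_neg (by simp only [lastI]; omega)]

lemma mem_latSet {n : ℕ} (hn : 2 ≤ n) (σ δ : ℝ) (m : Fin n → ℕ)
    (h1 : ∀ j : Fin n, (j:ℕ) < n-1 → (m j : ℝ) ≤ (1/40) * δ^(σ-1))
    (h2 : (m (lastI n hn) : ℝ) ≤ (1/80) * δ^(2*σ-1)) :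
    ptL n σ δ m ∈ latSet n σ δ hn := by
  constructor
  · intro j hj
    exact ⟨m j, h1 j hj, ptL_apply_lt σ δ m hj⟩
  · exact ⟨m (lastI n hn), h2, ptL_apply_last hn σ δ m⟩

lemma latSet_repr {n : ℕ} (hn : 2 ≤ n) (σ δ : ℝ) {z : EuclideanSpace ℝ (Fin n)}
    (hz : z ∈ latSet n σ δ hn) :
    ∃ m : Fin n → ℕ, z = ptL n σ δ m ∧
      (∀ j : Fin n, (j:ℕ) < n-1 → (m j : ℝ) ≤ (1/40) * δ^(σ-1)) ∧
      (m (lastI n hn) : ℝ) ≤ (1/80) * δ^(2*σ-1) := by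
  classical
  obtain ⟨h1, q, hq, hzq⟩ := hz
  refine ⟨fun j => if h : (j:ℕ) < n-1 then (h1 j h).choose else q, ?_, ?_, ?_⟩
  · ext j
    by_cases h : (j:ℕ) < n-1
    · rw [ptL_apply_lt σ δ _ h]
      simp only [dif_pos h]
      exact (h1 j h).choose_spec.2
    · rw [lastI_spec hn j h, ptL_apply_last hn σ δ]
      simpa [lastI] using hzq
  · intro j hj
    simp only [dif_pos hj]
    exact (h1 j hj).choose_spec.1
  · simpa [lastI] using hq

lemma coord_abs_le_dist {n : ℕ} (z x : EuclideanSpace ℝ (Fin n)) (j : Fin n) :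
    |z j - x j| ≤ dist z x := by
  rw [EuclideanSpace.dist_eq]
  have h : |z j - x j| = Real.sqrt (dist (z j) (x j) ^ 2) := by
    rw [Real.sqrt_sq_eq_abs, Real.dist_eq, abs_abs]
  rw [h]
  apply Real.sqrt_le_sqrt
  exact Finset.single_le_sum (f := fun i => dist (z i) (x i) ^ 2)
    (fun i _ => sq_nonneg _) (Finset.mem_univ j)

lemma lastI_val {n : ℕ} (hn : 2 ≤ n) : ((lastI n hn : Fin n) : ℕ) = n - 1 := rfl

noncomputable def winF (n : ℕ) (σ δ : ℝ) (x : EuclideanSpace ℝ (Fin n)) (r : ℝ) :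
    Finset (Fin n → ℕ) :=
  Fintype.piFinset (fun j => Finset.Icc
    (if (j:ℕ) < n-1 then ⌈(x j - (r+1))*δ^σ⌉₊ else ⌈(x j - (r+1))*δ^(2*σ)/2⌉₊)
    (if (j:ℕ) < n-1 then min ⌊(x j + (r+1))*δ^σ⌋₊ ⌊(1/40)*δ^(σ-1)⌋₊
      else min ⌊(x j + (r+1))*δ^(2*σ)/2⌋₊ ⌊(1/80)*δ^(2*σ-1)⌋₊))

noncomputable def fullF (n : ℕ) (σ δ : ℝ) : Finset (Fin n → ℕ) :=
  Fintype.piFinset (fun j => Finset.Icc 0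
    (if (j:ℕ) < n-1 then ⌊(1/40)*δ^(σ-1)⌋₊ else ⌊(1/80)*δ^(2*σ-1)⌋₊))

section main
variable {n : ℕ} {σ δ : ℝ}

lemma covering (hn : 2 ≤ n) (hδ0 : 0 < δ) (x : EuclideanSpace ℝ (Fin n)) {r : ℝ} (hr : 0 < r) :
    (⋃ z ∈ latSet n σ δ hn, closedBall z 1) ∩ ball x r ⊆
      ⋃ m ∈ winF n σ δ x r, closedBall (ptL n σ δ m) 1 := by
  have hs0 : (0:ℝ) < δ^σ := Real.rpow_pos_of_pos hδ0 _
  have hs20 : (0:ℝ) < δ^(2*σ) := Real.rpow_pos_of_pos hδ0 _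
  have hinv1 : δ^(-σ) * δ^σ = 1 := by rw [← Real.rpow_add hδ0]; simp
  have hinv2 : δ^(-(2*σ)) * δ^(2*σ) = 1 := by rw [← Real.rpow_add hδ0]; simp
  rintro y ⟨hyΩ, hyb⟩
  obtain ⟨z, hz, hyz⟩ := Set.mem_iUnion₂.1 hyΩ
  obtain ⟨m, hzm, hm1, hm2⟩ := latSet_repr hn σ δ hz
  refine Set.mem_iUnion₂.2 ⟨m, ?_, by rw [← hzm]; exact hyz⟩
  have hdzx : dist z x ≤ r + 1 := by
    calc dist z x ≤ dist z y + dist y x := dist_triangle _ _ _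
      _ ≤ 1 + r := add_le_add (by rw [dist_comm]; exact Metric.mem_closedBall.1 hyz)
          (le_of_lt (Metric.mem_ball.1 hyb))
      _ = r + 1 := by ring
  rw [winF, Fintype.mem_piFinset]
  intro j
  have hco : |z j - x j| ≤ r + 1 := le_trans (coord_abs_le_dist z x j) hdzx
  rw [abs_le] at hco
  rw [Finset.mem_Icc]
  by_cases hj : (j:ℕ) < n-1
  · rw [if_pos hj, if_pos hj]
    have hzj : z j = (m j : ℝ) * δ^(-σ) := by rw [hzm]; exact ptL_apply_lt σ δ m hj
    rw [hzj] at hco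
    have hlow : (x j - (r+1)) * δ^σ ≤ (m j : ℝ) := by
      have h := mul_le_mul_of_nonneg_right (by linarith [hco.1] :
        x j - (r+1) ≤ (m j : ℝ) * δ^(-σ)) hs0.le
      rwa [mul_assoc, hinv1, mul_one] at h
    have hhigh : (m j : ℝ) ≤ (x j + (r+1)) * δ^σ := by
      have h := mul_le_mul_of_nonneg_right (by linarith [hco.2] :
        (m j : ℝ) * δ^(-σ) ≤ x j + (r+1)) hs0.le
      rwa [mul_assoc, hinv1, mul_one] at h
    exact ⟨Nat.ceil_le.2 hlow, le_min (Nat.le_floor hhigh) (Nat.le_floor (hm1 j hj))⟩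
  · rw [if_neg hj, if_neg hj]
    have hjl : j = lastI n hn := lastI_spec hn j hj
    have hzj : z j = 2 * (m j : ℝ) * δ^(-(2*σ)) := by
      rw [hzm, hjl]; exact ptL_apply_last hn σ δ m
    rw [hzj] at hco
    have hlow : (x j - (r+1)) * δ^(2*σ) / 2 ≤ (m j : ℝ) := by
      have h := mul_le_mul_of_nonneg_right (by linarith [hco.1] :
        x j - (r+1) ≤ 2 * (m j : ℝ) * δ^(-(2*σ))) hs20.le
      rw [mul_assoc, hinv2, mul_one] at h
      linarith
    have hhigh : (m j : ℝ) ≤ (x j + (r+1)) * δ^(2*σ) / 2 := by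
      have h := mul_le_mul_of_nonneg_right (by linarith [hco.2] :
        2 * (m j : ℝ) * δ^(-(2*σ)) ≤ x j + (r+1)) hs20.le
      rw [mul_assoc, hinv2, mul_one] at h
      linarith
    refine ⟨Nat.ceil_le.2 hlow, le_min (Nat.le_floor hhigh) (Nat.le_floor ?_)⟩
    rw [hjl]; exact hm2

set_option maxHeartbeats 1000000 in
lemma winF_card_le (hn : 2 ≤ n) (hδ0 : 0 < δ)
    (h40 : (40:ℝ) ≤ δ^(σ-1)) (h80 : (80:ℝ) ≤ δ^(2*σ-1))
    (x : EuclideanSpace ℝ (Fin n)) {r : ℝ} (hr : 1 ≤ r) :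
    ((winF n σ δ x r).card : ℝ) ≤
      5^n * (min (max 1 (r*δ^σ)) (δ^(σ-1)/20))^(n-1)
        * (min (max 1 (r*δ^(2*σ))) (δ^(2*σ-1)/40)) := by
  classical
  have hs0 : (0:ℝ) < δ^σ := Real.rpow_pos_of_pos hδ0 _
  have hs20 : (0:ℝ) < δ^(2*σ) := Real.rpow_pos_of_pos hδ0 _
  set A := min (max 1 (r*δ^σ)) (δ^(σ-1)/20) with hA
  set B := min (max 1 (r*δ^(2*σ))) (δ^(2*σ-1)/40) with hB
  have hAnn : (0:ℝ) ≤ A := le_min (by positivity) (by positivity)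
  have hBnn : (0:ℝ) ≤ B := le_min (by positivity) (by positivity)
  have hAj : ∀ j : Fin n, (j:ℕ) < n-1 → (((Finset.Icc
      (if (j:ℕ) < n-1 then ⌈(x j - (r+1))*δ^σ⌉₊ else ⌈(x j - (r+1))*δ^(2*σ)/2⌉₊)
      (if (j:ℕ) < n-1 then min ⌊(x j + (r+1))*δ^σ⌋₊ ⌊(1/40)*δ^(σ-1)⌋₊
        else min ⌊(x j + (r+1))*δ^(2*σ)/2⌋₊ ⌊(1/80)*δ^(2*σ-1)⌋₊)).card : ℕ) : ℝ) ≤ 5 * A := by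
    intro j hj
    simp only [if_pos hj]
    have hab : (x j - (r+1))*δ^σ ≤ (x j + (r+1))*δ^σ := by nlinarith
    have h1 := card_Icc_le' ⌊(1/40)*δ^(σ-1)⌋₊ hab
    have hba : (x j + (r+1))*δ^σ - (x j - (r+1))*δ^σ = 2*(r+1)*δ^σ := by ring
    rw [hba] at h1
    refine le_trans h1 ?_
    have hM1 : (⌊(1/40)*δ^(σ-1)⌋₊ : ℝ) ≤ (1/40)*δ^(σ-1) := Nat.floor_le (by positivity)
    rcases le_total (max 1 (r*δ^σ)) (δ^(σ-1)/20) with h|h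
    · rw [hA, min_eq_left h]
      have hm := min_le_left (2*(r+1)*δ^σ) ((⌊(1/40)*δ^(σ-1)⌋₊ : ℕ) : ℝ)
      have h2 : 2*(r+1)*δ^σ ≤ 4*(r*δ^σ) := by nlinarith
      rcases le_total (r*δ^σ) 1 with h3|h3
      · rw [max_eq_left h3]; nlinarith
      · rw [max_eq_right h3]; nlinarith
    · rw [hA, min_eq_right h]
      have hm := min_le_right (2*(r+1)*δ^σ) ((⌊(1/40)*δ^(σ-1)⌋₊ : ℕ) : ℝ)
      linarith
  have hBl : (((Finset.Icc
      (if ((lastI n hn : Fin n):ℕ) < n-1 then ⌈(x (lastI n hn) - (r+1))*δ^σ⌉₊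
        else ⌈(x (lastI n hn) - (r+1))*δ^(2*σ)/2⌉₊)
      (if ((lastI n hn : Fin n):ℕ) < n-1
        then min ⌊(x (lastI n hn) + (r+1))*δ^σ⌋₊ ⌊(1/40)*δ^(σ-1)⌋₊
        else min ⌊(x (lastI n hn) + (r+1))*δ^(2*σ)/2⌋₊ ⌊(1/80)*δ^(2*σ-1)⌋₊)).card : ℕ) : ℝ)
      ≤ 5 * B := by
    have hj : ¬ ((lastI n hn : Fin n):ℕ) < n-1 := by rw [lastI_val hn]; omega
    simp only [if_neg hj]
    have hab : (x (lastI n hn) - (r+1))*δ^(2*σ)/2 ≤ (x (lastI n hn) + (r+1))*δ^(2*σ)/2 := by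
      nlinarith
    have h1 := card_Icc_le' ⌊(1/80)*δ^(2*σ-1)⌋₊ hab
    have hba : (x (lastI n hn) + (r+1))*δ^(2*σ)/2 - (x (lastI n hn) - (r+1))*δ^(2*σ)/2
        = (r+1)*δ^(2*σ) := by ring
    rw [hba] at h1
    refine le_trans h1 ?_
    have hM2 : (⌊(1/80)*δ^(2*σ-1)⌋₊ : ℝ) ≤ (1/80)*δ^(2*σ-1) := Nat.floor_le (by positivity)
    rcases le_total (max 1 (r*δ^(2*σ))) (δ^(2*σ-1)/40) with h|h
    · rw [hB, min_eq_left h]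
      have hm := min_le_left ((r+1)*δ^(2*σ)) ((⌊(1/80)*δ^(2*σ-1)⌋₊ : ℕ) : ℝ)
      have h2 : (r+1)*δ^(2*σ) ≤ 2*(r*δ^(2*σ)) := by nlinarith
      rcases le_total (r*δ^(2*σ)) 1 with h3|h3
      · rw [max_eq_left h3]; nlinarith
      · rw [max_eq_right h3]; nlinarith
    · rw [hB, min_eq_right h]
      have hm := min_le_right ((r+1)*δ^(2*σ)) ((⌊(1/80)*δ^(2*σ-1)⌋₊ : ℕ) : ℝ)
      linarith
  have hcard : ((winF n σ δ x r).card : ℝ) = ∏ j : Fin n, (((Finset.Icc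
      (if (j:ℕ) < n-1 then ⌈(x j - (r+1))*δ^σ⌉₊ else ⌈(x j - (r+1))*δ^(2*σ)/2⌉₊)
      (if (j:ℕ) < n-1 then min ⌊(x j + (r+1))*δ^σ⌋₊ ⌊(1/40)*δ^(σ-1)⌋₊
        else min ⌊(x j + (r+1))*δ^(2*σ)/2⌋₊ ⌊(1/80)*δ^(2*σ-1)⌋₊)).card : ℕ) : ℝ) := by
    rw [winF, Fintype.card_piFinset, Nat.cast_prod]
  rw [hcard, ← Finset.prod_erase_mul Finset.univ _ (Finset.mem_univ (lastI n hn))]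
  have hcarderase : (Finset.univ.erase (lastI n hn)).card = n - 1 := by
    rw [Finset.card_erase_of_mem (Finset.mem_univ _), Finset.card_univ, Fintype.card_fin]
  have hprod : (∏ j ∈ Finset.univ.erase (lastI n hn), (((Finset.Icc
      (if (j:ℕ) < n-1 then ⌈(x j - (r+1))*δ^σ⌉₊ else ⌈(x j - (r+1))*δ^(2*σ)/2⌉₊)
      (if (j:ℕ) < n-1 then min ⌊(x j + (r+1))*δ^σ⌋₊ ⌊(1/40)*δ^(σ-1)⌋₊
        else min ⌊(x j + (r+1))*δ^(2*σ)/2⌋₊ ⌊(1/80)*δ^(2*σ-1)⌋₊)).card : ℕ) : ℝ))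
      ≤ (5*A)^(n-1) := by
    calc _ ≤ ∏ _j ∈ Finset.univ.erase (lastI n hn), (5*A) := by
          apply Finset.prod_le_prod (fun j _ => by positivity)
          intro j hjmem
          have hjne : j ≠ lastI n hn := Finset.ne_of_mem_erase hjmem
          have hjlt : (j:ℕ) < n-1 := by
            have hl1 := j.isLt
            have hl2 : (j:ℕ) ≠ n-1 := fun hcon => hjne (Fin.ext (by rw [hcon, lastI_val hn]))
            omega
          exact hAj j hjlt
      _ = (5*A)^(n-1) := by rw [Finset.prod_const, hcarderase]
  calc _ ≤ (5*A)^(n-1) * (5*B) := by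
        apply mul_le_mul hprod hBl (by positivity) (by positivity)
    _ = (5^(n-1)*5) * (A^(n-1)*B) := by rw [mul_pow]; ring
    _ = 5^n * (A^(n-1)*B) := by
        congr 1
        rw [← pow_succ]
        congr 1
        omega
    _ = 5^n * A^(n-1) * B := by ring

lemma balls_disjoint (hn : 2 ≤ n) (hδ0 : 0 < δ)
    (h2 : 2 ≤ δ^(-σ)) (h2' : 1 ≤ δ^(-(2*σ))) :
    ∀ m m' : Fin n → ℕ, m ≠ m' →
      Disjoint (ball (ptL n σ δ m) 1) (ball (ptL n σ δ m') 1) := by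
  intro m m' hne
  obtain ⟨j, hj⟩ := Function.ne_iff.1 hne
  apply ball_disjoint_ball
  have hone := nat_abs_sub_ge_one hj
  calc (1:ℝ) + 1 ≤ |ptL n σ δ m j - ptL n σ δ m' j| := by
        by_cases h : (j:ℕ) < n-1
        · rw [ptL_apply_lt σ δ m h, ptL_apply_lt σ δ m' h,
            ← sub_mul, abs_mul, abs_of_pos (Real.rpow_pos_of_pos hδ0 _)]
          nlinarith [Real.rpow_pos_of_pos hδ0 (-σ)]
        · rw [lastI_spec hn j h, ptL_apply_last hn σ δ m, ptL_apply_last hn σ δ m',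
            show 2 * ((m (lastI n hn) : ℕ) : ℝ) * δ^(-(2*σ)) -
              2 * ((m' (lastI n hn) : ℕ) : ℝ) * δ^(-(2*σ))
              = 2 * (((m (lastI n hn) : ℕ) : ℝ) - ((m' (lastI n hn) : ℕ) : ℝ)) * δ^(-(2*σ))
              from by ring, abs_mul, abs_mul,
            abs_of_pos (Real.rpow_pos_of_pos hδ0 _), abs_of_pos (by norm_num : (0:ℝ) < 2)]
          have hone' : (1:ℝ) ≤ |((m (lastI n hn) : ℕ) : ℝ) - ((m' (lastI n hn) : ℕ) : ℝ)| := by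
            apply nat_abs_sub_ge_one
            rw [lastI_spec hn j h] at hj
            exact hj
          nlinarith [Real.rpow_pos_of_pos hδ0 (-(2*σ))]
    _ ≤ dist (ptL n σ δ m) (ptL n σ δ m') := coord_abs_le_dist _ _ j

lemma mem_fullF (hn : 2 ≤ n) (hδ0 : 0 < δ) {m : Fin n → ℕ} (hm : m ∈ fullF n σ δ) :
    (∀ j : Fin n, (j:ℕ) < n-1 → (m j : ℝ) ≤ (1/40) * δ^(σ-1)) ∧
      (m (lastI n hn) : ℝ) ≤ (1/80) * δ^(2*σ-1) := by
  rw [fullF, Fintype.mem_piFinset] at hm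
  constructor
  · intro j hj
    have := (Finset.mem_Icc.1 (hm j)).2
    rw [if_pos hj] at this
    calc (m j : ℝ) ≤ (⌊(1/40)*δ^(σ-1)⌋₊ : ℝ) := Nat.cast_le.2 this
      _ ≤ _ := Nat.floor_le (by positivity)
  · have := (Finset.mem_Icc.1 (hm (lastI n hn))).2
    rw [if_neg (by rw [lastI_val hn]; omega)] at this
    calc ((m (lastI n hn) : ℕ) : ℝ) ≤ (⌊(1/80)*δ^(2*σ-1)⌋₊ : ℝ) := Nat.cast_le.2 this
      _ ≤ _ := Nat.floor_le (by positivity)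

lemma fullF_card_ge (hn : 2 ≤ n) (hδ0 : 0 < δ) :
    ((1/40)*δ^(σ-1))^(n-1) * ((1/80)*δ^(2*σ-1)) ≤ ((fullF n σ δ).card : ℝ) := by
  have hcard : ((fullF n σ δ).card : ℝ) = ∏ j : Fin n,
      (((if (j:ℕ) < n-1 then ⌊(1/40)*δ^(σ-1)⌋₊ else ⌊(1/80)*δ^(2*σ-1)⌋₊) + 1 : ℕ) : ℝ) := by
    rw [fullF, Fintype.card_piFinset, Nat.cast_prod]
    congr 1
    funext j
    rw [Nat.card_Icc, Nat.sub_zero]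
  rw [hcard, ← Finset.prod_erase_mul Finset.univ _ (Finset.mem_univ (lastI n hn))]
  have hcarderase : (Finset.univ.erase (lastI n hn)).card = n - 1 := by
    rw [Finset.card_erase_of_mem (Finset.mem_univ _), Finset.card_univ, Fintype.card_fin]
  have h1 : ((1/40)*δ^(σ-1))^(n-1) ≤
      ∏ j ∈ Finset.univ.erase (lastI n hn),
        (((if (j:ℕ) < n-1 then ⌊(1/40)*δ^(σ-1)⌋₊ else ⌊(1/80)*δ^(2*σ-1)⌋₊) + 1 : ℕ) : ℝ) := by
    calc ((1/40)*δ^(σ-1))^(n-1)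
        = ∏ _j ∈ Finset.univ.erase (lastI n hn), ((1/40)*δ^(σ-1)) := by
          rw [Finset.prod_const, hcarderase]
      _ ≤ _ := by
          apply Finset.prod_le_prod (fun j _ => by positivity)
          intro j hjmem
          have hjne : j ≠ lastI n hn := Finset.ne_of_mem_erase hjmem
          have hjlt : (j:ℕ) < n-1 := by
            have h1 := j.isLt
            have h2 : (j:ℕ) ≠ n-1 := fun hcon => hjne (Fin.ext (by rw [hcon, lastI_val hn]))
            omega
          rw [if_pos hjlt]
          push_cast
          linarith [Nat.lt_floor_add_one ((1/40)*δ^(σ-1))]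
  have h2 : (1/80)*δ^(2*σ-1) ≤
      (((if ((lastI n hn : Fin n):ℕ) < n-1 then ⌊(1/40)*δ^(σ-1)⌋₊
        else ⌊(1/80)*δ^(2*σ-1)⌋₊) + 1 : ℕ) : ℝ) := by
    rw [if_neg (by rw [lastI_val hn]; omega)]
    push_cast
    linarith [Nat.lt_floor_add_one ((1/80)*δ^(2*σ-1))]
  apply mul_le_mul h1 h2 (by positivity) (le_trans (by positivity) h1)

lemma ptL_norm_le (hn : 2 ≤ n) (hδ0 : 0 < δ) (m : Fin n → ℕ)
    (h1 : ∀ j : Fin n, (j:ℕ) < n-1 → (m j : ℝ) ≤ (1/40) * δ^(σ-1))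
    (h2 : (m (lastI n hn) : ℝ) ≤ (1/80) * δ^(2*σ-1)) :
    ‖ptL n σ δ m‖ ≤ n * δ⁻¹ / 40 := by
  have hd1 : δ^(σ-1) * δ^(-σ) = δ⁻¹ := by
    rw [← Real.rpow_add hδ0, show σ - 1 + -σ = -1 from by ring, Real.rpow_neg_one]
  have hd2 : δ^(2*σ-1) * δ^(-(2*σ)) = δ⁻¹ := by
    rw [← Real.rpow_add hδ0, show 2*σ - 1 + -(2*σ) = -1 from by ring, Real.rpow_neg_one]
  have hcoord : ∀ j : Fin n, ‖ptL n σ δ m j‖ ≤ δ⁻¹ / 40 := by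
    intro j
    by_cases h : (j:ℕ) < n-1
    · rw [ptL_apply_lt σ δ m h, Real.norm_eq_abs,
        abs_of_nonneg (by positivity)]
      calc (m j : ℝ) * δ^(-σ) ≤ ((1/40)*δ^(σ-1)) * δ^(-σ) :=
            mul_le_mul_of_nonneg_right (h1 j h) (Real.rpow_pos_of_pos hδ0 _).le
        _ = δ⁻¹ / 40 := by rw [mul_assoc, hd1]; ring
    · rw [lastI_spec hn j h, ptL_apply_last hn σ δ m, Real.norm_eq_abs,
        abs_of_nonneg (by positivity)]
      calc 2 * ((m (lastI n hn) : ℕ) : ℝ) * δ^(-(2*σ))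
          ≤ 2 * ((1/80)*δ^(2*σ-1)) * δ^(-(2*σ)) := by
            apply mul_le_mul_of_nonneg_right _ (Real.rpow_pos_of_pos hδ0 _).le
            linarith
        _ = δ⁻¹ / 40 := by
            rw [show 2*((1/80)*δ^(2*σ-1))*δ^(-(2*σ)) = (δ^(2*σ-1) * δ^(-(2*σ)))/40 from by
              ring, hd2]
  have hsum : ∑ j : Fin n, ‖ptL n σ δ m j‖^2 ≤ (n:ℝ) * (δ⁻¹/40)^2 := by
    calc ∑ j : Fin n, ‖ptL n σ δ m j‖^2 ≤ ∑ _j : Fin n, (δ⁻¹/40)^2 :=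
          Finset.sum_le_sum (fun j _ => by
            have := hcoord j
            nlinarith [norm_nonneg (ptL n σ δ m j)])
      _ = (n:ℝ) * (δ⁻¹/40)^2 := by
          rw [Finset.sum_const, Finset.card_univ, Fintype.card_fin, nsmul_eq_mul]
  rw [EuclideanSpace.norm_eq]
  have hnn : (0:ℝ) ≤ (n:ℝ) * δ⁻¹ / 40 := by positivity
  calc √(∑ j : Fin n, ‖ptL n σ δ m j‖^2) ≤ √(((n:ℝ) * δ⁻¹ / 40)^2) := by
        apply Real.sqrt_le_sqrt
        have hn1 : (1:ℝ) ≤ (n:ℝ) := by exact_mod_cast (by omega : 1 ≤ n)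
        nlinarith [hsum, sq_nonneg (δ⁻¹/40)]
    _ = (n:ℝ) * δ⁻¹ / 40 := Real.sqrt_sq hnn
end main

end auxlemmas

lemma max_rpow_le {δ e p : ℝ} (hδ0 : 0 < δ) (hδ1 : δ < 1) (hp : 0 < p) :
    (max 1 (δ ^ (e * p))) ^ (1/p) ≤ max 1 (δ ^ e) := by
  rcases le_or_gt 0 e with he | he
  · rw [max_eq_left (Real.rpow_le_one hδ0.le hδ1.le (by positivity)), Real.one_rpow]
    exact le_max_left _ _
  · rw [max_eq_right (Real.one_le_rpow_of_pos_of_le_one_of_nonpos hδ0 hδ1.le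
      (by nlinarith : e * p ≤ 0)), ← Real.rpow_mul hδ0.le]
    rw [show e * p * (1/p) = e from by field_simp]
    exact le_max_right _ _

lemma R_up {n : ℕ} (hn : 2 ≤ n) {σ α p δ k : ℝ} (hσ0 : 0 < σ) (hσ1 : σ < 1/2)
    (hα : 0 < α) (hp1 : 1 ≤ p) (hαp : α * p ≤ n) (hδ0 : 0 < δ) (hδ1 : δ < 1)
    (hk : 0 ≤ k) {r : ℝ} (hr : 1 ≤ r) :
    r ^ α * (r ^ (-(n:ℝ)) *
        (5^n * (min (max 1 (r*δ^σ)) (δ^(σ-1)/20))^(n-1)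
          * (min (max 1 (r*δ^(2*σ))) (δ^(2*σ-1)/40)) * k)) ^ (1/p)
      ≤ ((k+1) * 5^n) ^ (1/p) * max 1 (δ ^ (σ * ((n:ℝ)+1) / p - α)) := by
  have hp0 : (0:ℝ) < p := lt_of_lt_of_le one_pos hp1
  have hr0 : (0:ℝ) < r := lt_of_lt_of_le one_pos hr
  set A := min (max 1 (r*δ^σ)) (δ^(σ-1)/20) with hA
  set B := min (max 1 (r*δ^(2*σ))) (δ^(2*σ-1)/40) with hB
  have hAnn : (0:ℝ) ≤ A := le_min (by positivity) (by positivity)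
  have hBnn : (0:ℝ) ≤ B := le_min (by positivity) (by positivity)
  have hsplit : r ^ (-(n:ℝ)) * (5^n * A^(n-1) * B * k) = (5^n*k) * (r^(-(n:ℝ)) * A^(n-1) * B) := by
    ring
  rw [hsplit, Real.mul_rpow (by positivity) (by positivity)]
  have hmain : r ^ α * (r^(-(n:ℝ)) * A^(n-1) * B) ^ (1/p)
      = (r ^ (α*p - n) * A^(n-1) * B) ^ (1/p) := by
    have h1 : r ^ α = (r ^ (α*p)) ^ (1/p) := by
      rw [← Real.rpow_mul hr0.le]
      congr 1
      field_simp
    rw [h1, ← Real.mul_rpow (by positivity) (by positivity)]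
    congr 1
    rw [show r ^ (α*p) * (r^(-(n:ℝ)) * A^(n-1) * B) = (r^(α*p) * r^(-(n:ℝ))) * (A^(n-1)*B) from
      by ring, ← Real.rpow_add hr0, show α*p + -(n:ℝ) = α*p - n from by ring]
    ring
  calc r ^ α * ((5^n*k)^(1/p) * (r^(-(n:ℝ)) * A^(n-1) * B) ^ (1/p))
      = (5^n*k)^(1/p) * (r ^ α * (r^(-(n:ℝ)) * A^(n-1) * B) ^ (1/p)) := by ring
    _ = (5^n*k)^(1/p) * (r ^ (α*p - n) * A^(n-1) * B) ^ (1/p) := by rw [hmain]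
    _ ≤ (5^n*k)^(1/p) * (max 1 (δ ^ (σ*((n:ℝ)+1) - α*p))) ^ (1/p) := by
        apply mul_le_mul_of_nonneg_left _ (by positivity)
        apply Real.rpow_le_rpow (by positivity) _ (by positivity)
        exact core_upper hn hσ0 hσ1 (by positivity) hαp hδ0 hδ1 hr
    _ ≤ (5^n*k)^(1/p) * max 1 (δ ^ (σ * ((n:ℝ)+1) / p - α)) := by
        apply mul_le_mul_of_nonneg_left _ (by positivity)
        have hep : σ*((n:ℝ)+1) - α*p = (σ * ((n:ℝ)+1) / p - α) * p := by
          field_simp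
        rw [hep]
        exact max_rpow_le hδ0 hδ1 hp0
    _ ≤ ((k+1) * 5^n) ^ (1/p) * max 1 (δ ^ (σ * ((n:ℝ)+1) / p - α)) := by
        apply mul_le_mul_of_nonneg_right _ (le_max_of_le_left one_pos.le)
        apply Real.rpow_le_rpow (by positivity) (by nlinarith [pow_pos (show (0:ℝ)<5 by norm_num) n]) (by positivity)

lemma R_low {n : ℕ} (hn : 2 ≤ n) {σ α p δ b : ℝ} (hσ0 : 0 < σ)
    (hα : 0 < α) (hp1 : 1 ≤ p) (hδ0 : 0 < δ) (hb : 0 < b) :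
    ((n:ℝ)) ^ (α - (n:ℝ)/p) * (((1/40:ℝ))^(n-1) * (1/80) * b) ^ (1/p)
        * δ ^ (σ * ((n:ℝ)+1) / p - α)
      ≤ ((n:ℝ)*δ⁻¹) ^ α * (((n:ℝ)*δ⁻¹) ^ (-(n:ℝ)) *
          (((1/40)*δ^(σ-1))^(n-1) * ((1/80)*δ^(2*σ-1)) * b)) ^ (1/p) := by
  have hp0 : (0:ℝ) < p := lt_of_lt_of_le one_pos hp1
  have hn0 : (0:ℝ) < n := by exact_mod_cast (by omega : 0 < n)
  have hnc : ((n-1:ℕ):ℝ) = (n:ℝ)-1 := by rw [Nat.cast_sub (by omega)]; norm_num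
  have hinv : (0:ℝ) < δ⁻¹ := by positivity
  -- rewrite the δ-power pieces
  have e1 : ((1/40)*δ^(σ-1))^(n-1) = (1/40:ℝ)^(n-1) * δ^((σ-1)*((n:ℝ)-1)) := by
    rw [mul_pow, ← Real.rpow_natCast (δ^(σ-1)) (n-1), ← Real.rpow_mul hδ0.le, hnc]
  have e2 : ((n:ℝ)*δ⁻¹) ^ (-(n:ℝ)) = (n:ℝ)^(-(n:ℝ)) * δ^((n:ℝ)) := by
    rw [Real.mul_rpow hn0.le hinv.le, Real.inv_rpow hδ0.le, ← Real.rpow_neg hδ0.le]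
    norm_num
  have e3 : ((n:ℝ)*δ⁻¹) ^ α = (n:ℝ)^α * δ^(-α) := by
    rw [Real.mul_rpow hn0.le hinv.le, Real.inv_rpow hδ0.le, ← Real.rpow_neg hδ0.le]
  -- RHS inner term
  have hinner : ((n:ℝ)*δ⁻¹) ^ (-(n:ℝ)) * (((1/40)*δ^(σ-1))^(n-1) * ((1/80)*δ^(2*σ-1)) * b)
      = ((n:ℝ)^(-(n:ℝ)) * ((1/40:ℝ)^(n-1) * (1/80) * b)) * δ^(σ*((n:ℝ)+1)) := by
    rw [e1, e2]
    rw [show (n:ℝ)^(-(n:ℝ)) * δ^((n:ℝ)) *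
        ((1/40:ℝ)^(n-1) * δ^((σ-1)*((n:ℝ)-1)) * ((1/80)*δ^(2*σ-1)) * b)
        = ((n:ℝ)^(-(n:ℝ)) * ((1/40:ℝ)^(n-1) * (1/80) * b))
          * (δ^((n:ℝ)) * δ^((σ-1)*((n:ℝ)-1)) * δ^(2*σ-1)) from by ring,
      ← Real.rpow_add hδ0, ← Real.rpow_add hδ0,
      show (n:ℝ) + (σ-1)*((n:ℝ)-1) + (2*σ-1) = σ*((n:ℝ)+1) from by ring]
  rw [hinner, e3]
  have hsplit : (n:ℝ) ^ α * δ ^ (-α) *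
        ((n:ℝ)^(-(n:ℝ)) * ((1/40:ℝ)^(n-1)*(1/80)*b) * δ^(σ*((n:ℝ)+1)))^(1/p)
      = ((n:ℝ)^α * (n:ℝ)^(-(n:ℝ)*(1/p))) * (((1/40:ℝ)^(n-1)*(1/80)*b)^(1/p))
          * (δ^(-α) * δ^(σ*((n:ℝ)+1)*(1/p))) := by
    rw [Real.mul_rpow (by positivity) (by positivity),
      Real.mul_rpow (by positivity) (by positivity),
      ← Real.rpow_mul hδ0.le, ← Real.rpow_mul hn0.le]
    ring
  rw [hsplit]
  apply le_of_eq
  have h1 : (n:ℝ)^(α - (n:ℝ)/p) = (n:ℝ)^α * (n:ℝ)^(-(n:ℝ)*(1/p)) := by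
    rw [← Real.rpow_add hn0]; congr 1; ring
  have h2 : δ^(σ*((n:ℝ)+1)/p - α) = δ^(-α) * δ^(σ*((n:ℝ)+1)*(1/p)) := by
    rw [← Real.rpow_add hδ0]; congr 1; ring
  rw [h1, h2]

set_option maxHeartbeats 1000000 in
/-- For the characteristic function `V = χ_Ω` of the `O(1)`-neighbourhood
`Ω` of the lattice `Λ`, with constants depending only on `n, σ, α, p`,
`‖V‖_{𝓛^{α,p}} ∼ max{1, δ^{σ(n+1)/p - α}}`. -/
theorem stmt19 (n : ℕ) (hn : 2 ≤ n) (σ α p : ℝ) (hσ0 : 0 < σ) (hσ1 : σ < 1/2)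
    (hα : 0 < α) (hp1 : 1 ≤ p) (hp2 : p ≤ (n : ℝ) / α) :
    ∃ c C : ℝ, 0 < c ∧ 0 < C ∧
      ∀ δ : ℝ, 0 < δ → δ < 1 →
        δ ^ σ ≤ 1/2 → δ ^ (1 - σ) ≤ 1/40 → δ ^ (1 - 2*σ) ≤ 1/80 →
      ∀ V : EuclideanSpace ℝ (Fin n) → ℝ,
        V = Set.indicator
          (⋃ z ∈ {z : EuclideanSpace ℝ (Fin n) |
              (∀ j : Fin n, (j : ℕ) < n - 1 →
                ∃ pj : ℕ, (pj : ℝ) ≤ (1/40) * δ ^ (σ - 1) ∧ z j = (pj : ℝ) * δ ^ (-σ)) ∧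
              (∃ q : ℕ, (q : ℝ) ≤ (1/80) * δ ^ (2*σ - 1) ∧
                z ⟨n - 1, by omega⟩ = 2 * (q : ℝ) * δ ^ (-(2*σ)))},
            Metric.closedBall z 1)
          (fun _ => (1 : ℝ)) →
        ENNReal.ofReal (c * max 1 (δ ^ (σ * ((n : ℝ) + 1) / p - α))) ≤ morreyNorm n α p V ∧
          morreyNorm n α p V ≤ ENNReal.ofReal (C * max 1 (δ ^ (σ * ((n : ℝ) + 1) / p - α))) := by
  classical
  have hp0 : (0:ℝ) < p := lt_of_lt_of_le one_pos hp1
  have h1p : (0:ℝ) ≤ 1/p := by positivity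
  have hn0 : (0:ℝ) < n := by exact_mod_cast (by omega : 0 < n)
  set b := (volume (Metric.ball (0 : EuclideanSpace ℝ (Fin n)) 1)).toReal with hbdef
  set k := (volume (Metric.closedBall (0 : EuclideanSpace ℝ (Fin n)) 1)).toReal with hkdef
  have hb0 : 0 < b :=
    ENNReal.toReal_pos (measure_ball_pos _ _ one_pos).ne' measure_ball_lt_top.ne
  have hk0 : 0 < k :=
    ENNReal.toReal_pos (measure_closedBall_pos _ _ one_pos).ne' measure_closedBall_lt_top.ne
  have hbeq : volume (Metric.ball (0 : EuclideanSpace ℝ (Fin n)) 1) = ENNReal.ofReal b :=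
    (ENNReal.ofReal_toReal measure_ball_lt_top.ne).symm
  have hkeq : volume (Metric.closedBall (0 : EuclideanSpace ℝ (Fin n)) 1) = ENNReal.ofReal k :=
    (ENNReal.ofReal_toReal measure_closedBall_lt_top.ne).symm
  set c₂ : ℝ := ((n:ℝ)) ^ (α - (n:ℝ)/p) * (((1/40:ℝ))^(n-1) * (1/80) * b) ^ (1/p) with hc2def
  have hc20 : 0 < c₂ := by
    apply mul_pos (Real.rpow_pos_of_pos hn0 _)
    apply Real.rpow_pos_of_pos
    positivity
  refine ⟨min (b ^ (1/p)) c₂, (b+1)^(1/p) + ((k+1)*5^n)^(1/p),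
    lt_min (Real.rpow_pos_of_pos hb0 _) hc20,
    by positivity, ?_⟩
  intro δ hδ0 hδ1 hhalf h40 h80 V hV
  have hδ1' : δ ≤ 1 := hδ1.le
  set C : ℝ := (b+1)^(1/p) + ((k+1)*5^n)^(1/p) with hCdef
  set c : ℝ := min (b ^ (1/p)) c₂ with hcdef
  have hC0 : 0 < C := by positivity
  -- numeric facts
  have h40' : (40:ℝ) ≤ δ^(σ-1) := by
    have hx : (0:ℝ) < δ^(σ-1) := Real.rpow_pos_of_pos hδ0 _
    have hmul : δ^(σ-1) * δ^(1-σ) = 1 := by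
      rw [← Real.rpow_add hδ0]; norm_num
    have h := mul_le_mul_of_nonneg_left h40 hx.le
    rw [hmul] at h
    linarith
  have h80' : (80:ℝ) ≤ δ^(2*σ-1) := by
    have hx : (0:ℝ) < δ^(2*σ-1) := Real.rpow_pos_of_pos hδ0 _
    have hmul : δ^(2*σ-1) * δ^(1-2*σ) = 1 := by
      rw [← Real.rpow_add hδ0]; norm_num
    have h := mul_le_mul_of_nonneg_left h80 hx.le
    rw [hmul] at h
    linarith
  have h2inv : (2:ℝ) ≤ δ^(-σ) := by
    have hx : (0:ℝ) < δ^(-σ) := Real.rpow_pos_of_pos hδ0 _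
    have hmul : δ^(-σ) * δ^σ = 1 := by rw [← Real.rpow_add hδ0]; norm_num
    have h := mul_le_mul_of_nonneg_left hhalf hx.le
    rw [hmul] at h
    linarith
  have h2inv' : (1:ℝ) ≤ δ^(-(2*σ)) :=
    Real.one_le_rpow_of_pos_of_le_one_of_nonpos hδ0 hδ1' (by linarith)
  have hδ40 : δ ≤ 1/40 := by
    have := Real.rpow_le_rpow_of_exponent_ge hδ0 hδ1' (by linarith : 1-σ ≤ 1)
    rw [Real.rpow_one] at this
    linarith
  have hδinv : (40:ℝ) ≤ δ⁻¹ := by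
    have hmul : δ⁻¹ * δ = 1 := inv_mul_cancel₀ hδ0.ne'
    have hx : (0:ℝ) < δ⁻¹ := by positivity
    have h := mul_le_mul_of_nonneg_left hδ40 hx.le
    rw [hmul] at h
    linarith
  have hαp : α * p ≤ (n:ℝ) := by
    have := mul_le_mul_of_nonneg_left hp2 hα.le
    rw [mul_div_cancel₀ _ hα.ne'] at this
    linarith
  -- the set
  set Ω : Set (EuclideanSpace ℝ (Fin n)) := ⋃ z ∈ latSet n σ δ hn, Metric.closedBall z 1
    with hΩdef
  have hVΩ : V = Set.indicator Ω (fun _ => (1:ℝ)) := hV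
  have hind : ∀ y, ENNReal.ofReal (V y ^ p) = Ω.indicator (fun _ => (1:ℝ≥0∞)) y := by
    intro y
    rw [hVΩ]
    by_cases hy : y ∈ Ω
    · rw [Set.indicator_of_mem hy, Set.indicator_of_mem hy, Real.one_rpow, ofReal_one]
    · rw [Set.indicator_of_notMem hy, Set.indicator_of_notMem hy,
        Real.zero_rpow hp0.ne', ofReal_zero]
  have hInt : ∀ (x : EuclideanSpace ℝ (Fin n)) (r : ℝ),
      (∫⁻ y in Metric.ball x r, ENNReal.ofReal (V y ^ p))
        = ∫⁻ y in Metric.ball x r, Ω.indicator (fun _ => (1:ℝ≥0∞)) y :=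
    fun x r => lintegral_congr (fun y => hind y)
  have hcbvol : ∀ z : EuclideanSpace ℝ (Fin n), volume (Metric.closedBall z 1)
      = ENNReal.ofReal k := by
    intro z
    rw [Measure.addHaar_closedBall_center]
    exact hkeq
  have hbvol : ∀ z : EuclideanSpace ℝ (Fin n), volume (Metric.ball z 1)
      = ENNReal.ofReal b := by
    intro z
    rw [Measure.addHaar_ball_center]
    exact hbeq
  constructor
  · -- LOWER BOUND
    simp only [morreyNorm, hInt]
    have hzero : (0 : EuclideanSpace ℝ (Fin n)) ∈ latSet n σ δ hn := by
      refine ⟨fun j hj => ⟨0, by push_cast; positivity, ?_⟩, 0, by push_cast; positivity, ?_⟩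
      · show (0 : EuclideanSpace ℝ (Fin n)) j = ((0:ℕ):ℝ) * δ^(-σ)
        simp
      · show (0 : EuclideanSpace ℝ (Fin n)) _ = 2 * ((0:ℕ):ℝ) * δ^(-(2*σ))
        simp
    have hball1 : Metric.ball (0 : EuclideanSpace ℝ (Fin n)) 1 ⊆ Ω := by
      rw [hΩdef]
      exact subset_trans ball_subset_closedBall
        (Set.subset_biUnion_of_mem (u := fun z => Metric.closedBall z 1) hzero)
    have hv1 : ENNReal.ofReal (b ^ (1/p)) ≤
        ENNReal.ofReal ((1:ℝ) ^ α) *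
          (ENNReal.ofReal ((1:ℝ) ^ (-(n:ℝ))) *
            ∫⁻ y in Metric.ball (0 : EuclideanSpace ℝ (Fin n)) 1,
              Ω.indicator (fun _ => (1:ℝ≥0∞)) y) ^ (1/p) := by
      rw [Real.one_rpow, Real.one_rpow, ofReal_one, one_mul, one_mul,
        ← ENNReal.ofReal_rpow_of_nonneg hb0.le h1p]
      apply ENNReal.rpow_le_rpow _ h1p
      rw [← hbeq, ← setLIntegral_one]
      apply setLIntegral_mono' measurableSet_ball
      intro y hy
      rw [Set.indicator_of_mem (hball1 hy)]
    set R : ℝ := (n:ℝ) * δ⁻¹ with hRdef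
    have hR0 : (0:ℝ) < R := by positivity
    set W : Set (EuclideanSpace ℝ (Fin n)) :=
      ⋃ m ∈ fullF n σ δ, Metric.ball (ptL n σ δ m) 1 with hWdef
    have hWmeas : MeasurableSet W :=
      (fullF n σ δ).measurableSet_biUnion (fun m _ => measurableSet_ball)
    have hWΩ : W ⊆ Ω := by
      rw [hΩdef]
      apply Set.iUnion₂_subset
      intro m hm
      refine subset_trans ball_subset_closedBall (Set.subset_biUnion_of_mem (u := fun z => Metric.closedBall z 1) ?_)
      exact mem_latSet hn σ δ m (mem_fullF hn hδ0 hm).1 (mem_fullF hn hδ0 hm).2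
    have hWR : W ⊆ Metric.ball (0 : EuclideanSpace ℝ (Fin n)) R := by
      apply Set.iUnion₂_subset
      intro m hm y hy
      have hnorm := ptL_norm_le hn hδ0 m (mem_fullF hn hδ0 hm).1 (mem_fullF hn hδ0 hm).2
      rw [Metric.mem_ball, dist_zero_right]
      have hd : dist y (ptL n σ δ m) < 1 := Metric.mem_ball.1 hy
      have h1 : ‖y‖ ≤ dist y (ptL n σ δ m) + ‖ptL n σ δ m‖ := by
        calc ‖y‖ = ‖(y - ptL n σ δ m) + ptL n σ δ m‖ := by rw [sub_add_cancel]
          _ ≤ ‖y - ptL n σ δ m‖ + ‖ptL n σ δ m‖ := norm_add_le _ _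
          _ = dist y (ptL n σ δ m) + ‖ptL n σ δ m‖ := by rw [dist_eq_norm]
      have hn2 : (2:ℝ) ≤ (n:ℝ) := by exact_mod_cast hn
      have h80n : (80:ℝ) ≤ (n:ℝ)*δ⁻¹ := by nlinarith
      calc ‖y‖ < 1 + (n:ℝ)*δ⁻¹/40 := by linarith
        _ ≤ R := by rw [hRdef]; nlinarith
    have hWvol : ENNReal.ofReal ((((1/40)*δ^(σ-1))^(n-1) * ((1/80)*δ^(2*σ-1))) * b)
        ≤ volume W := by
      have hdisj : (↑(fullF n σ δ) : Set (Fin n → ℕ)).PairwiseDisjoint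
          (fun m => Metric.ball (ptL n σ δ m) 1) := fun m _ m' _ hne =>
        balls_disjoint hn hδ0 h2inv h2inv' m m' hne
      rw [hWdef, measure_biUnion_finset hdisj (fun m _ => measurableSet_ball),
        Finset.sum_congr rfl (fun m _ => hbvol (ptL n σ δ m)), Finset.sum_const, nsmul_eq_mul,
        ← ENNReal.ofReal_natCast, ← ENNReal.ofReal_mul (Nat.cast_nonneg _)]
      apply ENNReal.ofReal_le_ofReal
      exact mul_le_mul_of_nonneg_right (fullF_card_ge hn hδ0) hb0.le
    have hIR : ENNReal.ofReal ((((1/40)*δ^(σ-1))^(n-1) * ((1/80)*δ^(2*σ-1))) * b)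
        ≤ ∫⁻ y in Metric.ball (0 : EuclideanSpace ℝ (Fin n)) R,
            Ω.indicator (fun _ => (1:ℝ≥0∞)) y := by
      refine le_trans hWvol ?_
      calc volume W = volume (W ∩ Metric.ball (0 : EuclideanSpace ℝ (Fin n)) R) := by
            rw [Set.inter_eq_self_of_subset_left hWR]
        _ = ∫⁻ y in Metric.ball (0 : EuclideanSpace ℝ (Fin n)) R,
              W.indicator (fun _ => (1:ℝ≥0∞)) y :=
            ((lintegral_indicator_one hWmeas).trans (Measure.restrict_apply hWmeas)).symm
        _ ≤ _ := setLIntegral_mono' measurableSet_ball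
            (fun y _ => Set.indicator_le_indicator_of_subset hWΩ (fun _ => zero_le) y)
    have hv2 : ENNReal.ofReal (c₂ * δ ^ (σ * ((n:ℝ)+1)/p - α)) ≤
        ENNReal.ofReal (R ^ α) * (ENNReal.ofReal (R ^ (-(n:ℝ))) *
          ∫⁻ y in Metric.ball (0 : EuclideanSpace ℝ (Fin n)) R,
            Ω.indicator (fun _ => (1:ℝ≥0∞)) y) ^ (1/p) := by
      calc ENNReal.ofReal (c₂ * δ ^ (σ * ((n:ℝ)+1)/p - α))
          ≤ ENNReal.ofReal (R ^ α * (R ^ (-(n:ℝ)) *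
              ((((1/40)*δ^(σ-1))^(n-1) * ((1/80)*δ^(2*σ-1))) * b)) ^ (1/p)) := by
            apply ENNReal.ofReal_le_ofReal
            rw [hc2def, hRdef]
            exact R_low hn hσ0 hα hp1 hδ0 hb0
        _ = ENNReal.ofReal (R^α) * (ENNReal.ofReal (R^(-(n:ℝ))) *
              ENNReal.ofReal ((((1/40)*δ^(σ-1))^(n-1) * ((1/80)*δ^(2*σ-1))) * b)) ^ (1/p) := by
            rw [← ENNReal.ofReal_mul (by positivity),
              ENNReal.ofReal_rpow_of_nonneg (by positivity) h1p,
              ← ENNReal.ofReal_mul (by positivity)]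
        _ ≤ _ := mul_le_mul' le_rfl (ENNReal.rpow_le_rpow (mul_le_mul' le_rfl hIR) h1p)
    rcases le_total (δ ^ (σ * ((n:ℝ)+1)/p - α)) 1 with hcase | hcase
    · rw [max_eq_left hcase]
      refine le_trans ?_ (le_trans hv1 (le_iSup_of_le (0 : EuclideanSpace ℝ (Fin n))
        (le_iSup_of_le (1:ℝ) (le_iSup_of_le one_pos le_rfl))))
      apply ENNReal.ofReal_le_ofReal
      rw [mul_one]
      exact min_le_left _ _
    · rw [max_eq_right hcase]
      refine le_trans ?_ (le_trans hv2 (le_iSup_of_le (0 : EuclideanSpace ℝ (Fin n))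
        (le_iSup_of_le R (le_iSup_of_le hR0 le_rfl))))
      apply ENNReal.ofReal_le_ofReal
      exact mul_le_mul_of_nonneg_right (min_le_right _ _) (by positivity)
  · -- UPPER BOUND
    simp only [morreyNorm, hInt]
    refine iSup_le fun x => iSup_le fun r => iSup_le fun hr => ?_
    rcases le_total r 1 with hr1 | hr1
    · -- small r : compare with ball volume
      have hI : (∫⁻ y in Metric.ball x r, Ω.indicator (fun _ => (1:ℝ≥0∞)) y)
          ≤ ENNReal.ofReal (r^(n:ℕ) * b) := by
        calc (∫⁻ y in Metric.ball x r, Ω.indicator (fun _ => (1:ℝ≥0∞)) y)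
            ≤ ∫⁻ _y in Metric.ball x r, (1:ℝ≥0∞) :=
              lintegral_mono (Set.indicator_le_self' (fun _ _ => zero_le))
          _ = volume (Metric.ball x r) := setLIntegral_one _
          _ ≤ volume (Metric.closedBall x r) := measure_mono ball_subset_closedBall
          _ = ENNReal.ofReal (r ^ (Module.finrank ℝ (EuclideanSpace ℝ (Fin n))))
                * volume (Metric.ball (0 : EuclideanSpace ℝ (Fin n)) 1) :=
              Measure.addHaar_closedBall _ _ hr.le
          _ = ENNReal.ofReal (r^(n:ℕ) * b) := by
              rw [hbeq, finrank_euclideanSpace_fin, ← ENNReal.ofReal_mul (by positivity)]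
      calc ENNReal.ofReal (r ^ α) *
            (ENNReal.ofReal (r ^ (-(n:ℝ))) *
              ∫⁻ y in Metric.ball x r, Ω.indicator (fun _ => (1:ℝ≥0∞)) y) ^ (1/p)
          ≤ ENNReal.ofReal (r ^ α) *
            (ENNReal.ofReal (r ^ (-(n:ℝ))) * ENNReal.ofReal (r^(n:ℕ) * b)) ^ (1/p) := by
            exact mul_le_mul' le_rfl (ENNReal.rpow_le_rpow (mul_le_mul' le_rfl hI) h1p)
        _ = ENNReal.ofReal (r ^ α * (r ^ (-(n:ℝ)) * (r^(n:ℕ) * b)) ^ (1/p)) := by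
            rw [← ENNReal.ofReal_mul (by positivity),
              ENNReal.ofReal_rpow_of_nonneg (by positivity) h1p,
              ← ENNReal.ofReal_mul (by positivity)]
        _ ≤ ENNReal.ofReal (C * max 1 (δ ^ (σ * ((n : ℝ) + 1) / p - α))) := by
            apply ENNReal.ofReal_le_ofReal
            have hr0 : (0:ℝ) < r := hr
            have hbb : r ^ (-(n:ℝ)) * (r^(n:ℕ) * b) = b := by
              rw [show r ^ (-(n:ℝ)) * (r^(n:ℕ) * b) = (r^(-(n:ℝ)) * r^((n:ℕ):ℝ)) * b from by
                rw [Real.rpow_natCast]; ring, ← Real.rpow_add hr0]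
              norm_num
            rw [hbb]
            have h1 : r ^ α ≤ 1 := Real.rpow_le_one hr.le hr1 hα.le
            have h2 : b ^ (1/p) ≤ (b+1)^(1/p) :=
              Real.rpow_le_rpow hb0.le (by linarith) h1p
            have h3 : (b+1)^(1/p) ≤ C := by
              rw [hCdef]
              have : (0:ℝ) ≤ ((k+1)*5^n)^(1/p) := by positivity
              linarith
            have h4 : (1:ℝ) ≤ max 1 (δ ^ (σ * ((n : ℝ) + 1) / p - α)) := le_max_left _ _
            have hb1p : (0:ℝ) ≤ b^(1/p) := by positivity
            calc r ^ α * b^(1/p) ≤ 1 * b^(1/p) := by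
                  apply mul_le_mul_of_nonneg_right h1 hb1p
              _ = b^(1/p) := one_mul _
              _ ≤ C := le_trans h2 h3
              _ ≤ C * max 1 (δ ^ (σ * ((n : ℝ) + 1) / p - α)) :=
                  le_mul_of_one_le_right hC0.le h4
    · -- large r : counting bound
      set A := min (max 1 (r*δ^σ)) (δ^(σ-1)/20) with hA
      set B := min (max 1 (r*δ^(2*σ))) (δ^(2*σ-1)/40) with hB
      have hAnn : (0:ℝ) ≤ A := le_min (by positivity) (by positivity)
      have hBnn : (0:ℝ) ≤ B := le_min (by positivity) (by positivity)
      have hr0 : (0:ℝ) < r := lt_of_lt_of_le one_pos hr1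
      have hI : (∫⁻ y in Metric.ball x r, Ω.indicator (fun _ => (1:ℝ≥0∞)) y)
          ≤ ENNReal.ofReal (5^n * A^(n-1) * B * k) := by
        set U : Set (EuclideanSpace ℝ (Fin n)) :=
          ⋃ m ∈ winF n σ δ x r, Metric.closedBall (ptL n σ δ m) 1 with hUdef
        have hUmeas : MeasurableSet U :=
          (winF n σ δ x r).measurableSet_biUnion (fun m _ => measurableSet_closedBall)
        calc (∫⁻ y in Metric.ball x r, Ω.indicator (fun _ => (1:ℝ≥0∞)) y)
            ≤ ∫⁻ y in Metric.ball x r, U.indicator (fun _ => (1:ℝ≥0∞)) y := by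
              apply setLIntegral_mono' measurableSet_ball
              intro y hy
              by_cases hyΩ : y ∈ Ω
              · rw [Set.indicator_of_mem hyΩ,
                  Set.indicator_of_mem (covering hn hδ0 x hr0 ⟨hyΩ, hy⟩)]
              · rw [Set.indicator_of_notMem hyΩ]
                exact zero_le
          _ ≤ ∫⁻ y, U.indicator (fun _ => (1:ℝ≥0∞)) y := setLIntegral_le_lintegral _ _
          _ = volume U := lintegral_indicator_one hUmeas
          _ ≤ ∑ m ∈ winF n σ δ x r, volume (Metric.closedBall (ptL n σ δ m) 1) :=
              measure_biUnion_finset_le _ _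
          _ = ((winF n σ δ x r).card : ℝ≥0∞) * ENNReal.ofReal k := by
              rw [Finset.sum_congr rfl (fun m _ => hcbvol (ptL n σ δ m)),
                Finset.sum_const, nsmul_eq_mul]
          _ ≤ ENNReal.ofReal (5^n * A^(n-1) * B * k) := by
              rw [← ENNReal.ofReal_natCast ((winF n σ δ x r).card),
                ← ENNReal.ofReal_mul (Nat.cast_nonneg _)]
              apply ENNReal.ofReal_le_ofReal
              apply mul_le_mul_of_nonneg_right _ hk0.le
              exact winF_card_le hn hδ0 h40' h80' x hr1
      calc ENNReal.ofReal (r ^ α) *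
            (ENNReal.ofReal (r ^ (-(n:ℝ))) *
              ∫⁻ y in Metric.ball x r, Ω.indicator (fun _ => (1:ℝ≥0∞)) y) ^ (1/p)
          ≤ ENNReal.ofReal (r ^ α) *
            (ENNReal.ofReal (r ^ (-(n:ℝ))) * ENNReal.ofReal (5^n * A^(n-1) * B * k)) ^ (1/p) :=
            mul_le_mul' le_rfl (ENNReal.rpow_le_rpow (mul_le_mul' le_rfl hI) h1p)
        _ = ENNReal.ofReal (r ^ α * (r ^ (-(n:ℝ)) * (5^n * A^(n-1) * B * k)) ^ (1/p)) := by
            rw [← ENNReal.ofReal_mul (by positivity),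
              ENNReal.ofReal_rpow_of_nonneg (by positivity) h1p,
              ← ENNReal.ofReal_mul (by positivity)]
        _ ≤ ENNReal.ofReal (C * max 1 (δ ^ (σ * ((n : ℝ) + 1) / p - α))) := by
            apply ENNReal.ofReal_le_ofReal
            calc r ^ α * (r ^ (-(n:ℝ)) * (5^n * A^(n-1) * B * k)) ^ (1/p)
                ≤ ((k+1) * 5^n) ^ (1/p) * max 1 (δ ^ (σ * ((n:ℝ)+1) / p - α)) :=
                  R_up hn hσ0 hσ1 hα hp1 hαp hδ0 hδ1 hk0.le hr1
              _ ≤ C * max 1 (δ ^ (σ * ((n:ℝ)+1) / p - α)) := by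
                  apply mul_le_mul_of_nonneg_right _ (le_max_of_le_left one_pos.le)
                  rw [hCdef]
                  have : (0:ℝ) ≤ (b+1)^(1/p) := by positivity
                  linarith
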